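/- Let G be a finite simple graph and vw an edge of G. Then vw is exposed if and only if w is a non-isolated simplicial vertex of the induced subgraph of G on N_G(v) (i.e., w has at least one neighbor in N_G(v), and the neighbors of w within the induced subgraph on N_G(v) together with w form a clique). -/

import Mathlib

variable {V : Type*}

/-- A maximal clique of `G`: a clique not properly contained in any other clique. -/
def IsMaxClique (G : SimpleGraph V) (s : Set V) : Prop :=
  G.IsClique s ∧ ∀ t : Set V, G.IsClique t → s ⊆ t → t = s

/-- `xy` is a facet edge of `G` if it is an edge and `{x, y}` is a maximal clique. -/
def IsFacetEdge (G : SimpleGraph V) (x y : V) : Prop :=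
  G.Adj x y ∧ IsMaxClique G {x, y}

/-- `xy` is an exposed edge of `G` if it is an edge contained in a unique maximal
clique and it is not a facet edge. -/
def IsExposedEdge (G : SimpleGraph V) (x y : V) : Prop :=
  G.Adj x y ∧ (∃! s : Set V, IsMaxClique G s ∧ x ∈ s ∧ y ∈ s) ∧ ¬ IsFacetEdge G x y

/-- A graph is chordal if every cycle of length at least four has a chord, i.e. an
edge of the graph joining two vertices of the cycle which is not an edge of the cycle. -/
def IsChordal (G : SimpleGraph V) : Prop :=
  ∀ ⦃v : V⦄ (w : G.Walk v v), w.IsCycle → 4 ≤ w.length →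
    ∃ a b, a ∈ w.support ∧ b ∈ w.support ∧ G.Adj a b ∧ s(a, b) ∉ w.edges

/-- `H` is obtained from `G` through an erasure: deletion of a single exposed edge. -/
def Erasure (G H : SimpleGraph V) : Prop :=
  ∃ x y : V, IsExposedEdge G x y ∧ H = G.deleteEdges {s(x, y)}

lemma exists_maxClique [Fintype V] (G : SimpleGraph V) {s : Set V} (hs : G.IsClique s) :
    ∃ t, IsMaxClique G t ∧ s ⊆ t := by
  classical
  obtain ⟨t, ht, hmax⟩ := Set.Finite.exists_maximalFor id
    {t : Set V | G.IsClique t ∧ s ⊆ t} (Set.toFinite _) ⟨s, hs, subset_rfl⟩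
  exact ⟨t, ⟨ht.1, fun t' ht' hsub => Set.Subset.antisymm (hmax (j := t') ⟨ht', ht.2.trans hsub⟩ hsub) hsub⟩, ht.2⟩

/-- An edge `vw` is exposed if and only if `w` is a non-isolated simplicial vertex of
the induced subgraph of `G` on `N_G(v)`: i.e. `w` has a neighbor in `N_G(v)`, and the
neighbors of `w` lying in `N_G(v)` together with `w` itself form a clique. -/
theorem isExposedEdge_iff_simplicial_in_link [Fintype V] (G : SimpleGraph V)
    (v w : V) (hvw : G.Adj v w) :
    IsExposedEdge G v w ↔
      ((∃ u ∈ G.neighborSet v, G.Adj w u) ∧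
        G.IsClique (insert w (G.neighborSet v ∩ G.neighborSet w))) := by
  classical
  set L := G.neighborSet v ∩ G.neighborSet w with hLdef
  constructor
  · rintro ⟨hadj, ⟨S, ⟨hSm, hvS, hwS⟩, huniq⟩, hnf⟩
    have hne : ∃ u ∈ G.neighborSet v, G.Adj w u := by
      by_contra h
      push_neg at h
      apply hnf
      refine ⟨hadj, ?_, ?_⟩
      · intro x hx y hy hxy
        simp only [Set.mem_insert_iff, Set.mem_singleton_iff] at hx hy
        rcases hx with rfl | rfl <;> rcases hy with rfl | rfl <;>
          first
            | exact absurd rfl hxy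
            | exact hadj
            | exact hadj.symm
      · intro t ht hsub
        apply Set.Subset.antisymm _ hsub
        intro x hx
        by_cases hxv : x = v
        · exact hxv ▸ Set.mem_insert _ _
        by_cases hxw : x = w
        · exact hxw ▸ Set.mem_insert_of_mem _ rfl
        exfalso
        have h1 : G.Adj v x := ht (hsub (Set.mem_insert _ _)) hx (Ne.symm hxv)
        have h2 : G.Adj w x := ht (hsub (Set.mem_insert_of_mem _ rfl)) hx (Ne.symm hxw)
        exact h x h1 h2
    refine ⟨hne, ?_⟩
    have key : ∀ u ∈ L, u ∈ S := by
      rintro u ⟨hu1, hu2⟩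
      have hclq3 : G.IsClique {v, w, u} := by
        intro x hx y hy hxy
        simp only [Set.mem_insert_iff, Set.mem_singleton_iff] at hx hy
        rcases hx with rfl | rfl | rfl <;> rcases hy with rfl | rfl | rfl <;>
          first
            | exact absurd rfl hxy
            | exact hadj
            | exact hadj.symm
            | exact hu1
            | exact hu1.symm
            | exact hu2
            | exact hu2.symm
      obtain ⟨T, hTm, hsubT⟩ := exists_maxClique G hclq3
      have : T = S :=
        huniq T ⟨hTm, hsubT (Set.mem_insert _ _),
          hsubT (Set.mem_insert_of_mem _ (Set.mem_insert _ _))⟩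
      exact this ▸ hsubT (Set.mem_insert_of_mem _ (Set.mem_insert_of_mem _ rfl))
    intro x hx y hy hxy
    rcases hx with rfl | hx
    · rcases hy with rfl | hy
      · exact absurd rfl hxy
      · exact hy.2
    · rcases hy with rfl | hy
      · exact hx.2.symm
      · exact hSm.1 (key x hx) (key y hy) hxy
  · rintro ⟨⟨u, huv, hwu⟩, hclq⟩
    have huL : u ∈ L := ⟨huv, hwu⟩
    have hunv : u ≠ v := fun h => G.irrefl (h ▸ huv)
    have hunw : u ≠ w := fun h => G.irrefl (h ▸ hwu)
    set S : Set V := insert v (insert w L) with hSdef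
    have hSclq : G.IsClique S := by
      intro x hx y hy hxy
      rcases hx with rfl | hx
      · rcases hy with rfl | hy
        · exact absurd rfl hxy
        rcases hy with rfl | hy
        · exact hvw
        · exact hy.1
      · rcases hy with rfl | hy
        · rcases hx with rfl | hx
          · exact hvw.symm
          · exact hx.1.symm
        · exact hclq hx hy hxy
    have hSsub : ∀ t : Set V, G.IsClique t → v ∈ t → w ∈ t → t ⊆ S := by
      intro t ht hv hw x hx
      by_cases hxv : x = v
      · exact hxv ▸ Set.mem_insert _ _
      by_cases hxw : x = w
      · exact Set.mem_insert_of_mem _ (hxw ▸ Set.mem_insert _ _)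
      have h1 : G.Adj v x := ht hv hx (Ne.symm hxv)
      have h2 : G.Adj w x := ht hw hx (Ne.symm hxw)
      exact Set.mem_insert_of_mem _ (Set.mem_insert_of_mem _ ⟨h1, h2⟩)
    have hSmax : IsMaxClique G S := by
      refine ⟨hSclq, fun t ht hsub => ?_⟩
      exact Set.Subset.antisymm
        (hSsub t ht (hsub (Set.mem_insert _ _))
          (hsub (Set.mem_insert_of_mem _ (Set.mem_insert _ _)))) hsub
    refine ⟨hvw, ⟨S, ⟨hSmax, Set.mem_insert _ _,
      Set.mem_insert_of_mem _ (Set.mem_insert _ _)⟩, ?_⟩, ?_⟩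
    · rintro T ⟨hTm, hvT, hwT⟩
      exact (hTm.2 S hSclq (hSsub T hTm.1 hvT hwT)).symm
    · rintro ⟨-, -, hmax⟩
      have hclq' : G.IsClique (insert u {v, w}) := by
        intro x hx y hy hxy
        simp only [Set.mem_insert_iff, Set.mem_singleton_iff] at hx hy
        rcases hx with rfl | rfl | rfl <;> rcases hy with rfl | rfl | rfl <;>
          first
            | exact absurd rfl hxy
            | exact hvw
            | exact hvw.symm
            | exact huv
            | exact huv.symm
            | exact hwu
            | exact hwu.symm
      have := hmax _ hclq' (Set.subset_insert _ _)
      have : u ∈ ({v, w} : Set V) := this ▸ Set.mem_insert _ _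
      rcases this with rfl | h
      · exact hunv rfl
      · exact hunw h
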